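/- Let K ≥ 2 be a natural number and E ≥ 0 a real number. Let V be the 2K×2K complex matrix with entries V_{jj} = 1+2E, V_{jk} = 2E whenever j ≠ k and j ≡ k (mod 2), and V_{jk} = 0 otherwise, and let Ω be the 2K×2K block-diagonal matrix with K diagonal blocks equal to ω = [[0,1],[−1,0]]. Then for each j ∈ {2,…,K}, the vector w^{(j)} ∈ ℂ^{2K} with entries w^{(j)}_1 = 1, w^{(j)}_2 = −i, w^{(j)}_{2j−1} = −1, w^{(j)}_{2j} = i, and all other entries 0, satisfies (i·Ω·V)·w^{(j)} = w^{(j)}; in particular i·Ω·V has 1 as an eigenvalue with at least K−1 linearly independent eigenvectors. -/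

import Mathlib

/-- For `2 ≤ j ≤ K`, the vector `w^{(j)}` with entries `w_1 = 1`, `w_2 = −i`,
`w_{2j−1} = −1`, `w_{2j} = i` (1-indexed) and all other entries `0`; here realized with
0-indexed positions `0, 1, 2j−2, 2j−1`. -/
noncomputable def eigvecOne (K j : ℕ) : Fin (2 * K) → ℂ := fun m =>
  if (m : ℕ) = 0 then 1
  else if (m : ℕ) = 1 then -Complex.I
  else if (m : ℕ) = 2 * j - 2 then -1
  else if (m : ℕ) = 2 * j - 1 then Complex.I
  else 0

lemma eigvec_decomp (K j : ℕ) (hj : 2 ≤ j) (hjK : j ≤ K) :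
    eigvecOne K j =
      Pi.single (⟨0, by omega⟩ : Fin (2 * K)) 1
      + Pi.single (⟨1, by omega⟩ : Fin (2 * K)) (-Complex.I)
      + Pi.single (⟨2 * j - 2, by omega⟩ : Fin (2 * K)) (-1)
      + Pi.single (⟨2 * j - 1, by omega⟩ : Fin (2 * K)) Complex.I := by
  funext m
  simp only [eigvecOne, Pi.add_apply, Pi.single_apply, Fin.ext_iff]
  split_ifs <;> simp_all <;> omega

lemma eigvec_at_odd (K j j' : ℕ) (hj : 2 ≤ j) (hj' : 2 ≤ j') (hjK : j ≤ K)
    (h : 2 * j - 1 < 2 * K) :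
    eigvecOne K j' ⟨2 * j - 1, h⟩ = if j' = j then Complex.I else 0 := by
  simp only [eigvecOne]
  split_ifs <;> first | rfl | (exfalso; omega) | (exfalso; simp_all) | (exfalso; simp_all; omega)

/-- Each vector `w^{(j)}` (for `j ∈ {2,…,K}`) is fixed by `i·Ω·V`; in particular `1` is
an eigenvalue of `i·Ω·V` with at least `K − 1` linearly independent eigenvectors. -/
theorem eigenvectors_one_of_symplectic_covariance (K : ℕ) (hK : 2 ≤ K) (E : ℝ)
    (hE : 0 ≤ E) (V Ω : Matrix (Fin (2 * K)) (Fin (2 * K)) ℂ)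
    (hV : ∀ j k, V j k =
      if j = k then ((1 + 2 * E : ℝ) : ℂ)
      else if (j : ℕ) % 2 = (k : ℕ) % 2 then ((2 * E : ℝ) : ℂ) else 0)
    (hΩ : ∀ j k, Ω j k =
      if (j : ℕ) % 2 = 0 ∧ (k : ℕ) = (j : ℕ) + 1 then 1
      else if (k : ℕ) % 2 = 0 ∧ (j : ℕ) = (k : ℕ) + 1 then -1 else 0) :
    (∀ j : ℕ, 2 ≤ j → j ≤ K →
        (Complex.I • (Ω * V)).mulVec (eigvecOne K j) = eigvecOne K j) ∧
      LinearIndependent ℂ (fun p : (Set.Icc 2 K : Set ℕ) => eigvecOne K p) := by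
  constructor
  · intro j hj hjK
    have hVw : V.mulVec (eigvecOne K j) = eigvecOne K j := by
      rw [eigvec_decomp K j hj hjK]
      simp only [Matrix.mulVec_add, Matrix.mulVec_single]
      funext m
      simp only [Pi.add_apply, Pi.smul_apply, Matrix.col_apply, MulOpposite.smul_eq_mul_unop, MulOpposite.unop_op, eigvecOne, Pi.single_apply, Fin.ext_iff, hV]
      split_ifs <;> first | (exfalso; omega) | omega | (push_cast; ring1)
    have hΩw : Complex.I • Ω.mulVec (eigvecOne K j) = eigvecOne K j := by
      have c0 : ∀ m : Fin (2 * K), Ω m ⟨0, by omega⟩ = if (m : ℕ) = 1 then -1 else 0 := by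
        intro m; rw [hΩ]; simp only [Fin.val_mk]
        split_ifs <;> first | rfl | (exfalso; omega) | (exfalso; simp_all) | (exfalso; simp_all; omega)
      have c1 : ∀ m : Fin (2 * K), Ω m ⟨1, by omega⟩ = if (m : ℕ) = 0 then 1 else 0 := by
        intro m; rw [hΩ]; simp only [Fin.val_mk]
        split_ifs <;> first | rfl | (exfalso; omega) | (exfalso; simp_all) | (exfalso; simp_all; omega)
      have c2 : ∀ m : Fin (2 * K), Ω m ⟨2 * j - 2, by omega⟩ =
          if (m : ℕ) = 2 * j - 1 then -1 else 0 := by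
        intro m; rw [hΩ]; simp only [Fin.val_mk]
        split_ifs <;> first | rfl | (exfalso; omega) | (exfalso; simp_all) | (exfalso; simp_all; omega)
      have c3 : ∀ m : Fin (2 * K), Ω m ⟨2 * j - 1, by omega⟩ =
          if (m : ℕ) = 2 * j - 2 then 1 else 0 := by
        intro m; rw [hΩ]; simp only [Fin.val_mk]
        split_ifs <;> first | rfl | (exfalso; omega) | (exfalso; simp_all) | (exfalso; simp_all; omega)
      conv_lhs => rw [eigvec_decomp K j hj hjK]
      simp only [Matrix.mulVec_add, Matrix.mulVec_single]
      funext m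
      simp only [Pi.smul_apply, Pi.add_apply, Matrix.col_apply, MulOpposite.smul_eq_mul_unop, MulOpposite.unop_op, c0 m, c1 m, c2 m, c3 m, eigvecOne, smul_eq_mul]
      split_ifs <;>
        first
          | (exfalso; omega)
          | simp [Complex.I_mul_I]
          | (ring_nf; simp [Complex.I_sq]; try ring1)
    rw [Matrix.smul_mulVec, ← Matrix.mulVec_mulVec, hVw, hΩw]
  · rw [linearIndependent_iff']
    intro s g hsum p hp
    have hpmem := p.2
    rw [Set.mem_Icc] at hpmem
    have hlt : 2 * (p : ℕ) - 1 < 2 * K := by omega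
    have h := congrFun hsum ⟨2 * (p : ℕ) - 1, hlt⟩
    simp only [Finset.sum_apply, Pi.smul_apply, smul_eq_mul, Pi.zero_apply] at h
    rw [Finset.sum_eq_single p (fun q _ hne => ?_) (fun hnp => absurd hp hnp)] at h
    · rw [eigvec_at_odd K (p : ℕ) (p : ℕ) hpmem.1 hpmem.1 hpmem.2 hlt, if_pos rfl] at h
      exact (mul_eq_zero.mp h).resolve_right Complex.I_ne_zero
    · have hqmem := q.2
      rw [Set.mem_Icc] at hqmem
      rw [eigvec_at_odd K (p : ℕ) (q : ℕ) hpmem.1 hqmem.1 hpmem.2 hlt, if_neg, mul_zero]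
      exact fun hval => hne (Subtype.ext hval)
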